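/- Let n ≥ 2 and let K ∈ 𝒦₀(ℝⁿ). Then ∫_{ℝⁿ} e^{−π·rdist(x,K)²} dx = Σ_{j=0}^{n} Ṽ_j(K); that is, the dual Wills functional W̃(K) := ∫_{ℝⁿ} e^{−π·rdist(x,K)²} dx equals the sum of all dual volumes of K. -/

import Mathlib

open MeasureTheory

open MeasureTheory

/-- The uniform (rotation invariant) probability measure `σ` on the unit sphere
`S^{n-1} ⊆ ℝⁿ`. -/
noncomputable def sphereProb (n : ℕ) :
    Measure (Metric.sphere (0 : EuclideanSpace ℝ (Fin n)) 1) :=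
  ((volume : Measure (EuclideanSpace ℝ (Fin n))).toSphere Set.univ)⁻¹ •
    (volume : Measure (EuclideanSpace ℝ (Fin n))).toSphere

/-- The radial function `ρ_K(u) = max {r : r • u ∈ K}` of a set `K ⊆ ℝⁿ`. -/
noncomputable def radialFn {n : ℕ} (K : Set (EuclideanSpace ℝ (Fin n)))
    (u : EuclideanSpace ℝ (Fin n)) : ℝ :=
  sSup {r : ℝ | r • u ∈ K}

/-- The minimal radial distance `rdist(x, K)`:  `0` if `x ∈ K`, and
`‖x‖ - ρ_K(x/‖x‖)` otherwise. -/
noncomputable def rdist {n : ℕ} (K : Set (EuclideanSpace ℝ (Fin n)))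
    (x : EuclideanSpace ℝ (Fin n)) : ℝ :=
  letI := Classical.dec (x ∈ K)
  if x ∈ K then 0 else ‖x‖ - radialFn K (‖x‖⁻¹ • x)

/-- `|D_k| = π^{k/2} / Γ(k/2 + 1)`, the volume of the `k`-dimensional unit ball. -/
noncomputable def unitBallVolF (k : ℕ) : ℝ :=
  Real.pi ^ ((k : ℝ) / 2) / Real.Gamma ((k : ℝ) / 2 + 1)

/-- The `j`-th dual volume `Ṽ_j(K) = C(n,j)·(|Dₙ|/|D_{n-j}|)·∫_{S^{n-1}} ρ_K(u)^j dσ(u)`. -/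
noncomputable def dualVolInt (n j : ℕ) (K : Set (EuclideanSpace ℝ (Fin n))) : ℝ :=
  (n.choose j : ℝ) * (unitBallVolF n / unitBallVolF (n - j)) *
    ∫ u : Metric.sphere (0 : EuclideanSpace ℝ (Fin n)) 1,
      radialFn K ↑u ^ j ∂(sphereProb n)



/-! ### Auxiliary lemmas -/

open Set Metric Real

section radial
variable {n : ℕ} {K : Set (EuclideanSpace ℝ (Fin n))}
  (hKcp : IsCompact K) (hKcv : Convex ℝ K) (hKint : 0 ∈ interior K)

include hKcp hKcv hKint

lemma memK_iff_gauge {x : EuclideanSpace ℝ (Fin n)} : x ∈ K ↔ gauge K x ≤ 1 := by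
  rw [gauge_le_one_iff_mem_closure hKcv (mem_interior_iff_mem_nhds.1 hKint),
    hKcp.isClosed.closure_eq]

lemma gauge_pos' {x : EuclideanSpace ℝ (Fin n)} (hx : x ≠ 0) : 0 < gauge K x :=
  (gauge_pos (absorbent_nhds_zero (mem_interior_iff_mem_nhds.1 hKint))
    (NormedSpace.isVonNBounded_of_isBounded _ hKcp.isBounded)).2 hx

lemma radialFn_eq_inv_gauge {u : EuclideanSpace ℝ (Fin n)} (hu : u ≠ 0) :
    radialFn K u = (gauge K u)⁻¹ := by
  have hg : 0 < gauge K u := gauge_pos' hKcp hKcv hKint hu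
  have hmem : ∀ r : ℝ, 0 ≤ r → (r • u ∈ K ↔ r ≤ (gauge K u)⁻¹) := by
    intro r hr
    rw [memK_iff_gauge hKcp hKcv hKint, gauge_smul_of_nonneg hr, smul_eq_mul,
      ← le_div_iff₀ hg, one_div]
  refine le_antisymm (csSup_le ⟨0, by simpa using interior_subset hKint⟩ fun r hr => ?_)
    (le_csSup ⟨(gauge K u)⁻¹, fun r hr => ?_⟩ ?_)
  · rcases le_or_gt r 0 with h | h
    · exact h.trans (by positivity)
    · exact (hmem r h.le).1 hr
  · rcases le_or_gt r 0 with h | h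
    · exact h.trans (by positivity)
    · exact (hmem r h.le).1 hr
  · exact (hmem _ (by positivity)).2 le_rfl

lemma radialFn_pos {u : EuclideanSpace ℝ (Fin n)} (hu : u ≠ 0) : 0 < radialFn K u := by
  rw [radialFn_eq_inv_gauge hKcp hKcv hKint hu]
  exact inv_pos.2 (gauge_pos' hKcp hKcv hKint hu)

lemma smul_mem_iff_le_radialFn {u : EuclideanSpace ℝ (Fin n)} (hu : u ≠ 0)
    {r : ℝ} (hr : 0 ≤ r) : r • u ∈ K ↔ r ≤ radialFn K u := by
  rw [radialFn_eq_inv_gauge hKcp hKcv hKint hu, memK_iff_gauge hKcp hKcv hKint,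
    gauge_smul_of_nonneg hr, smul_eq_mul, ← le_div_iff₀ (gauge_pos' hKcp hKcv hKint hu), one_div]

/-- global formula for rdist -/
lemma rdist_formula (x : EuclideanSpace ℝ (Fin n)) :
    (letI := Classical.dec (x ∈ K); if x ∈ K then (0:ℝ) else ‖x‖ - radialFn K (‖x‖⁻¹ • x))
      = max 0 (‖x‖ - ‖x‖ / gauge K x) := by
  rcases eq_or_ne x 0 with rfl | hx
  · simp [interior_subset hKint]
  · have hnx : (0:ℝ) < ‖x‖ := norm_pos_iff.2 hx
    have hu : (‖x‖⁻¹ • x) ≠ 0 := smul_ne_zero (by positivity) hx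
    have hg : 0 < gauge K x := gauge_pos' hKcp hKcv hKint hx
    have hρ : radialFn K (‖x‖⁻¹ • x) = ‖x‖ / gauge K x := by
      rw [radialFn_eq_inv_gauge hKcp hKcv hKint hu, gauge_smul_of_nonneg (by positivity),
        smul_eq_mul, mul_inv, inv_inv, div_eq_inv_mul, mul_comm]
    have hxu : ‖x‖ • (‖x‖⁻¹ • x) = x := smul_inv_smul₀ hnx.ne' x
    by_cases hxK : x ∈ K
    · have : ‖x‖ ≤ radialFn K (‖x‖⁻¹ • x) := by
        rw [← smul_mem_iff_le_radialFn hKcp hKcv hKint hu hnx.le, hxu]; exact hxK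
      simp only [hxK, if_true]
      rw [hρ] at this
      exact (max_eq_left (by linarith)).symm
    · have : ¬ (‖x‖ ≤ radialFn K (‖x‖⁻¹ • x)) := by
        rw [← smul_mem_iff_le_radialFn hKcp hKcv hKint hu hnx.le, hxu]; exact hxK
      push_neg at this
      simp only [hxK, if_false]
      rw [hρ] at this ⊢
      exact (max_eq_right (by linarith)).symm


/-- Global formula for `rdist`. -/
lemma rdist_formula' (x : EuclideanSpace ℝ (Fin n)) :
    rdist K x = max 0 (‖x‖ - ‖x‖ / gauge K x) := by
  simp only [rdist]
  exact rdist_formula hKcp hKcv hKint x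

end radial

noncomputable def Gm (k : ℕ) : ℝ :=
  Real.pi ^ (-(((k:ℝ)+1)/2)) * (1/2) * Real.Gamma (((k:ℝ)+1)/2)

lemma neg_one_lt_cast (k : ℕ) : (-1:ℝ) < (k:ℝ) := by
  have := Nat.cast_nonneg (α := ℝ) k; linarith

lemma integrableOn_pow_mul_exp (k : ℕ) :
    IntegrableOn (fun t : ℝ => t^k * Real.exp (-Real.pi * t^2)) (Ioi 0) := by
  refine (integrableOn_rpow_mul_exp_neg_mul_sq Real.pi_pos (neg_one_lt_cast k)).congr_fun
    (fun x hx => ?_) measurableSet_Ioi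
  beta_reduce
  rw [Real.rpow_natCast]

lemma Gm_eq (k : ℕ) :
    ∫ t in Ioi (0:ℝ), t^k * Real.exp (-Real.pi * t^2) = Gm k := by
  have h := integral_rpow_mul_exp_neg_mul_rpow (p := 2) (q := (k:ℝ)) (b := Real.pi)
    two_pos (neg_one_lt_cast k) Real.pi_pos
  rw [setIntegral_congr_fun measurableSet_Ioi (g := fun x : ℝ => x ^ (k:ℝ) * Real.exp (-Real.pi * x ^ (2:ℝ)))
    (fun x hx => ?_), h]
  · rw [Gm, neg_div]
  · beta_reduce
    rw [Real.rpow_natCast, Real.rpow_two]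

lemma Gm_pos (k : ℕ) : 0 < Gm k := by
  have h1 : (0:ℝ) < Real.Gamma (((k:ℝ)+1)/2) :=
    Real.Gamma_pos_of_pos (by positivity)
  have h2 : (0:ℝ) < Real.pi ^ (-(((k:ℝ)+1)/2)) := Real.rpow_pos_of_pos Real.pi_pos _
  exact mul_pos (mul_pos h2 (by norm_num)) h1

lemma oneDim (m : ℕ) {ρ : ℝ} (hρ : 0 < ρ) :
    IntegrableOn (fun r : ℝ => r^m * Real.exp (-Real.pi * (max 0 (r - ρ))^2)) (Ioi 0) ∧
    ∫ r in Ioi (0:ℝ), r^m * Real.exp (-Real.pi * (max 0 (r - ρ))^2)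
      = ρ^(m+1)/((m:ℝ)+1)
        + ∑ k ∈ Finset.range (m+1), ((m.choose k : ℝ)) * ρ^(m-k) * Gm k := by
  set F := fun r : ℝ => r^m * Real.exp (-Real.pi * (max 0 (r - ρ))^2) with hF
  have hA : EqOn F (fun r => r^m) (Ioc 0 ρ) := by
    intro r hr
    have h0 : max 0 (r - ρ) = 0 := max_eq_left (by linarith [hr.2])
    simp [hF, h0]
  have hIntA : IntegrableOn F (Ioc 0 ρ) :=
    ((continuous_pow m).integrableOn_Ioc).congr_fun hA.symm measurableSet_Ioc
  have intA : ∫ r in Ioc (0:ℝ) ρ, F r = ρ^(m+1)/((m:ℝ)+1) := by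
    rw [setIntegral_congr_fun measurableSet_Ioc hA,
      ← intervalIntegral.integral_of_le hρ.le, integral_pow]
    simp
  have hB : EqOn F (fun r => r^m * Real.exp (-Real.pi * (r - ρ)^2)) (Ioi ρ) := by
    intro r hr
    have h0 : max 0 (r - ρ) = r - ρ := max_eq_right (by simp at hr; linarith)
    simp [hF, h0]
  set G := fun t : ℝ => (t+ρ)^m * Real.exp (-Real.pi * t^2) with hG
  have Gexp : ∀ t : ℝ, G t
      = ∑ k ∈ Finset.range (m+1), (m.choose k : ℝ) * ρ^(m-k) * (t^k * Real.exp (-Real.pi * t^2)) := by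
    intro t
    rw [hG]
    simp only [add_pow, Finset.sum_mul]
    refine Finset.sum_congr rfl fun k hk => by ring
  have hIntG : IntegrableOn G (Ioi 0) := by
    refine IntegrableOn.congr_fun ?_ (fun t _ => (Gexp t).symm) measurableSet_Ioi
    exact integrable_finset_sum _ (fun k _ => ((integrableOn_pow_mul_exp k).const_mul _))
  have intG : ∫ t in Ioi (0:ℝ), G t
      = ∑ k ∈ Finset.range (m+1), ((m.choose k : ℝ)) * ρ^(m-k) * Gm k := by
    rw [setIntegral_congr_fun measurableSet_Ioi (fun t _ => Gexp t),
      integral_finset_sum _ (fun k hk => (integrableOn_pow_mul_exp k).const_mul _)]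
    refine Finset.sum_congr rfl fun k hk => ?_
    rw [MeasureTheory.integral_const_mul, Gm_eq]
  have mp : MeasurePreserving (· + ρ) (volume : Measure ℝ) volume :=
    measurePreserving_add_right volume ρ
  have emb : MeasurableEmbedding (· + ρ) := measurableEmbedding_addRight ρ
  have hpre : (· + ρ) ⁻¹' (Ioi ρ) = Ioi (0:ℝ) := by
    ext t; simp
  have hcomp : ∀ t : ℝ, (fun r => r^m * Real.exp (-Real.pi * (r - ρ)^2)) (t + ρ) = G t := by
    intro t; simp [hG]
  have hIntB : IntegrableOn (fun r => r^m * Real.exp (-Real.pi * (r - ρ)^2)) (Ioi ρ) := by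
    rw [← mp.integrableOn_comp_preimage emb, hpre]
    exact hIntG.congr_fun (fun t _ => (hcomp t).symm) measurableSet_Ioi
  have hIntB' : IntegrableOn F (Ioi ρ) := hIntB.congr_fun hB.symm measurableSet_Ioi
  have intB : ∫ r in Ioi ρ, F r
      = ∑ k ∈ Finset.range (m+1), ((m.choose k : ℝ)) * ρ^(m-k) * Gm k := by
    rw [setIntegral_congr_fun measurableSet_Ioi hB, ← mp.setIntegral_preimage_emb emb, hpre,
      ← intG]
    exact setIntegral_congr_fun measurableSet_Ioi (fun t _ => hcomp t)
  have hsplit : Ioc (0:ℝ) ρ ∪ Ioi ρ = Ioi 0 := Ioc_union_Ioi_eq_Ioi hρ.le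
  constructor
  · rw [← hsplit]; exact hIntA.union hIntB'
  · rw [← hsplit, setIntegral_union (Set.Ioc_disjoint_Ioi le_rfl) measurableSet_Ioi hIntA hIntB',
      intA, intB]

lemma unitBallVolF_pos (k : ℕ) : 0 < unitBallVolF k := by
  have h1 : (0:ℝ) < Real.Gamma ((k:ℝ)/2 + 1) := Real.Gamma_pos_of_pos (by positivity)
  have h2 : (0:ℝ) < Real.pi ^ ((k:ℝ)/2) := Real.rpow_pos_of_pos Real.pi_pos _
  exact div_pos h2 h1

lemma unitBallVolF_zero : unitBallVolF 0 = 1 := by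
  simp [unitBallVolF, Real.Gamma_one]

lemma Gm_mul_vol (k : ℕ) : Gm k * unitBallVolF (k+1) = 1/((k:ℝ)+1) := by
  have hs : (0:ℝ) < ((k:ℝ)+1)/2 := by positivity
  have hcast : (((k+1:ℕ)):ℝ)/2 = ((k:ℝ)+1)/2 := by push_cast; ring
  have hΓ : Real.Gamma (((k:ℝ)+1)/2 + 1) = (((k:ℝ)+1)/2) * Real.Gamma (((k:ℝ)+1)/2) :=
    Real.Gamma_add_one hs.ne'
  have hΓpos : (0:ℝ) < Real.Gamma (((k:ℝ)+1)/2) := Real.Gamma_pos_of_pos hs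
  have hππ : Real.pi ^ (-(((k:ℝ)+1)/2)) * Real.pi ^ (((k:ℝ)+1)/2) = 1 := by
    rw [← Real.rpow_add Real.pi_pos, neg_add_cancel, Real.rpow_zero]
  rw [Gm, unitBallVolF, hcast, hΓ]
  set a := Real.pi ^ (-(((k:ℝ)+1)/2)) with ha
  set b := Real.pi ^ (((k:ℝ)+1)/2) with hb
  set g := Real.Gamma (((k:ℝ)+1)/2) with hg
  have hk1 : (0:ℝ) < (k:ℝ) + 1 := by positivity
  field_simp
  linear_combination hππ

lemma coeff_eq {n j : ℕ} (hj : j < n) :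
    (n:ℝ) * (((n-1).choose j : ℝ) * Gm (n-1-j)) * unitBallVolF n
      = (n.choose j : ℝ) * (unitBallVolF n / unitBallVolF (n-j)) := by
  have hk : n - j = (n-1-j) + 1 := by omega
  have hGV := Gm_mul_vol (n-1-j)
  have hnat : (n-1).choose j * n = n.choose j * (n - j) := by
    have := Nat.choose_mul_succ_eq (n-1) j
    rwa [Nat.sub_add_cancel (by omega : 1 ≤ n)] at this
  have hreal : (((n-1).choose j : ℝ)) * (n:ℝ) = (n.choose j : ℝ) * (((n-1-j:ℕ):ℝ) + 1) := by
    have : (((n-1).choose j * n : ℕ) : ℝ) = ((n.choose j * (n - j) : ℕ) : ℝ) := by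
      exact_mod_cast congrArg (Nat.cast : ℕ → ℝ) hnat
    push_cast at this
    rw [this, hk]
    push_cast
    ring
  have hVpos := unitBallVolF_pos ((n-1-j)+1)
  have hk1 : (0:ℝ) < ((n-1-j:ℕ):ℝ) + 1 := by positivity
  rw [hk]
  have hGm : Gm (n-1-j) = 1/((((n-1-j:ℕ)):ℝ)+1) / unitBallVolF ((n-1-j)+1) := by
    rw [← hGV]; field_simp
  rw [hGm]
  field_simp
  linear_combination (unitBallVolF n) * hreal

lemma sqrtpi_pow (n : ℕ) : Real.sqrt Real.pi ^ n = Real.pi ^ ((n:ℝ)/2) := by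
  rw [Real.sqrt_eq_rpow, ← Real.rpow_natCast (Real.pi ^ ((1:ℝ)/2)) n,
    ← Real.rpow_mul Real.pi_pos.le]
  ring_nf

lemma sphere_mass {n : ℕ} (hn : 2 ≤ n) :
    ((volume : Measure (EuclideanSpace ℝ (Fin n))).toSphere Set.univ)
      = ENNReal.ofReal ((n:ℝ) * unitBallVolF n) := by
  haveI : Nonempty (Fin n) := ⟨⟨0, by omega⟩⟩
  haveI : Nontrivial (EuclideanSpace ℝ (Fin n)) := inferInstance
  rw [Measure.toSphere_apply_univ, EuclideanSpace.volume_ball]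
  rw [finrank_euclideanSpace_fin, Fintype.card_fin]
  simp only [ENNReal.ofReal_one, one_pow, one_mul]
  rw [sqrtpi_pow]
  rw [← ENNReal.ofReal_natCast n, ← ENNReal.ofReal_mul (by positivity)]
  rfl

lemma reindexP (m : ℕ) (t : ℝ) :
    t^(m+1)/((m:ℝ)+1) + ∑ k ∈ Finset.range (m+1), ((m.choose k : ℝ)) * t^(m-k) * Gm k
    = ∑ j ∈ Finset.range (m+2),
        (if j = m+1 then 1/((m:ℝ)+1) else ((m.choose j : ℝ)) * Gm (m-j)) * t^j := by
  conv_rhs => rw [show m+2 = m+1+1 from rfl, Finset.sum_range_succ]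
  rw [if_pos rfl,
    ← Finset.sum_range_reflect (fun k => ((m.choose k:ℝ)) * t^(m-k) * Gm k) (m+1)]
  rw [add_comm]
  congr 1
  · refine Finset.sum_congr rfl fun j hj => ?_
    have hjm : j ≤ m := by simpa [Nat.lt_succ_iff] using Finset.mem_range.1 hj

    rw [if_neg (by omega), show m + 1 - 1 - j = m - j by omega,
      Nat.choose_symm hjm, show m - (m - j) = j by omega]
    ring
  · ring

lemma polar_lintegral {n : ℕ} (hn : 2 ≤ n) (f : EuclideanSpace ℝ (Fin n) → ℝ)
    (hf : Measurable f) :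
    ∫⁻ x, ENNReal.ofReal (f x) ∂(volume : Measure (EuclideanSpace ℝ (Fin n)))
      = ∫⁻ p : Metric.sphere (0 : EuclideanSpace ℝ (Fin n)) 1 × Ioi (0:ℝ),
          ENNReal.ofReal (f ((p.2 : ℝ) • (p.1 : EuclideanSpace ℝ (Fin n))))
          ∂((volume : Measure (EuclideanSpace ℝ (Fin n))).toSphere.prod
              (Measure.volumeIoiPow (n-1))) := by
  haveI : Nonempty (Fin n) := ⟨⟨0, by omega⟩⟩
  haveI : Nontrivial (EuclideanSpace ℝ (Fin n)) := inferInstance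
  have hmp := (volume : Measure (EuclideanSpace ℝ (Fin n))).measurePreserving_homeomorphUnitSphereProd
  rw [finrank_euclideanSpace_fin] at hmp
  have hg : Measurable (fun p : Metric.sphere (0 : EuclideanSpace ℝ (Fin n)) 1 × Ioi (0:ℝ)
      => ENNReal.ofReal (f ((p.2 : ℝ) • (p.1 : EuclideanSpace ℝ (Fin n))))) := by
    apply Measurable.ennreal_ofReal
    apply hf.comp
    exact ((continuous_subtype_val.comp continuous_snd).smul
      (continuous_subtype_val.comp continuous_fst)).measurable
  rw [← hmp.lintegral_comp hg]
  have h1 : ∀ x : ({0}ᶜ : Set (EuclideanSpace ℝ (Fin n))),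
      ENNReal.ofReal (f (((homeomorphUnitSphereProd _ x).2 : ℝ)
        • ((homeomorphUnitSphereProd _ x).1 : EuclideanSpace ℝ (Fin n))))
      = ENNReal.ofReal (f ↑x) := by
    intro x
    congr 1
    simp only [homeomorphUnitSphereProd_apply_snd_coe, homeomorphUnitSphereProd_apply_fst_coe]
    congr 1
    exact smul_inv_smul₀ (norm_ne_zero_iff.2 x.2) _
  calc ∫⁻ x, ENNReal.ofReal (f x) ∂(volume : Measure (EuclideanSpace ℝ (Fin n)))
      = ∫⁻ x in ({0}ᶜ : Set (EuclideanSpace ℝ (Fin n))), ENNReal.ofReal (f x) ∂volume := by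
        rw [MeasureTheory.restrict_compl_singleton]
    _ = ∫⁻ x : ({0}ᶜ : Set (EuclideanSpace ℝ (Fin n))), ENNReal.ofReal (f ↑x)
          ∂(volume.comap Subtype.val) :=
        (lintegral_subtype_comap (measurableSet_singleton _).compl
          (fun x => ENNReal.ofReal (f x))).symm
    _ = _ := (lintegral_congr h1).symm

/-- For a convex body `K ⊆ ℝⁿ` (`n ≥ 2`) containing the origin in its interior, the dual
Wills functional `W̃(K) = ∫_{ℝⁿ} e^{-π·rdist(x,K)²} dx` equals `Σ_{j=0}^n Ṽ_j(K)`. -/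
theorem stmt8 {n : ℕ} (hn : 2 ≤ n)
    (K : Set (EuclideanSpace ℝ (Fin n)))
    (hKcp : IsCompact K) (hKcv : Convex ℝ K) (hKint : 0 ∈ interior K) :
    (∫ x : EuclideanSpace ℝ (Fin n), Real.exp (-Real.pi * rdist K x ^ 2))
      = ∑ j ∈ Finset.range (n + 1), dualVolInt n j K := by
  haveI : Nonempty (Fin n) := ⟨⟨0, by omega⟩⟩
  haveI : Nontrivial (EuclideanSpace ℝ (Fin n)) := inferInstance
  have hgc : Continuous (gauge K) := continuous_gauge hKcv (mem_interior_iff_mem_nhds.1 hKint)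
  set ρ : Metric.sphere (0 : EuclideanSpace ℝ (Fin n)) 1 → ℝ :=
    fun u => radialFn K ↑u with hρdef
  have hu0 : ∀ u : Metric.sphere (0 : EuclideanSpace ℝ (Fin n)) 1,
      (u : EuclideanSpace ℝ (Fin n)) ≠ 0 := fun u => ne_of_mem_sphere u.2 one_ne_zero
  have hρpos : ∀ u, 0 < ρ u := fun u => radialFn_pos hKcp hKcv hKint (hu0 u)
  have hρeq : ∀ u, ρ u = (gauge K ↑u)⁻¹ :=
    fun u => radialFn_eq_inv_gauge hKcp hKcv hKint (hu0 u)
  have hρcont : Continuous ρ := by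
    have h : Continuous fun u : Metric.sphere (0 : EuclideanSpace ℝ (Fin n)) 1 =>
        (gauge K ↑u)⁻¹ :=
      (hgc.comp continuous_subtype_val).inv₀ fun u => (gauge_pos' hKcp hKcv hKint (hu0 u)).ne'
    exact h.congr fun u => (hρeq u).symm
  set F : EuclideanSpace ℝ (Fin n) → ℝ :=
    fun x => Real.exp (-Real.pi * (max 0 (‖x‖ - ‖x‖ / gauge K x))^2) with hFdef
  have hFm : Measurable F := by
    apply Real.measurable_exp.comp
    exact ((measurable_const.max
      (measurable_norm.sub (measurable_norm.div hgc.measurable))).pow_const 2).const_mul _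
  have hFeq : ∀ x, Real.exp (-Real.pi * rdist K x ^ 2) = F x := fun x => by
    rw [rdist_formula' hKcp hKcv hKint x]
  have hFsmul : ∀ (u : Metric.sphere (0 : EuclideanSpace ℝ (Fin n)) 1) (r : ℝ), 0 < r →
      F ((r : ℝ) • (u : EuclideanSpace ℝ (Fin n)))
        = Real.exp (-Real.pi * (max 0 (r - ρ u))^2) := by
    intro u r hr
    have hu1 : ‖(u : EuclideanSpace ℝ (Fin n))‖ = 1 := mem_sphere_zero_iff_norm.1 u.2
    have hg0 : 0 < gauge K (u : EuclideanSpace ℝ (Fin n)) := gauge_pos' hKcp hKcv hKint (hu0 u)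
    have hnorm : ‖r • (u : EuclideanSpace ℝ (Fin n))‖ = r := by
      rw [norm_smul, hu1, mul_one, Real.norm_eq_abs, abs_of_pos hr]
    have hgauge : gauge K (r • (u : EuclideanSpace ℝ (Fin n))) = r * gauge K ↑u := by
      rw [gauge_smul_of_nonneg hr.le, smul_eq_mul]
    have hdiv : r / (r * gauge K (u : EuclideanSpace ℝ (Fin n))) = (gauge K ↑u)⁻¹ := by
      field_simp
    simp only [hFdef]
    rw [hnorm, hgauge, hdiv, ← hρeq]
  -- Step 1: Bochner integral to lintegral
  have h1 : (∫ x : EuclideanSpace ℝ (Fin n), Real.exp (-Real.pi * rdist K x ^ 2))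
      = (∫⁻ x, ENNReal.ofReal (F x) ∂volume).toReal := by
    rw [integral_congr_ae (Filter.Eventually.of_forall hFeq),
      integral_eq_lintegral_of_nonneg_ae
        (Filter.Eventually.of_forall fun x => (Real.exp_pos _).le) hFm.aestronglyMeasurable]
  -- coefficients
  set b : ℕ → ℝ := fun j => if j = n then 1/(n:ℝ) else ((n-1).choose j : ℝ) * Gm (n-1-j)
    with hbdef
  have hbnonneg : ∀ j, 0 ≤ b j := by
    intro j
    by_cases h : j = n
    · simp only [hbdef, if_pos h]; positivity
    · simp only [hbdef, if_neg h]
      exact mul_nonneg (Nat.cast_nonneg _) (Gm_pos _).le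
  set P : ℝ → ℝ := fun t => ∑ j ∈ Finset.range (n+1), b j * t^j with hPdef
  have hone : ∀ u, ∫ r in Ioi (0:ℝ),
      r^(n-1) * Real.exp (-Real.pi * (max 0 (r - ρ u))^2) = P (ρ u) := by
    intro u
    have e1 : n - 1 + 2 = n + 1 := by omega
    have e2 : n - 1 + 1 = n := by omega
    have e3 : ((n-1:ℕ):ℝ) + 1 = (n:ℝ) := by
      rw [Nat.cast_sub (by omega : 1 ≤ n)]; ring
    rw [(oneDim (n-1) (hρpos u)).2, reindexP (n-1) (ρ u), e1, hPdef, hbdef]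
    refine Finset.sum_congr rfl fun j hj => ?_
    rw [e2, e3]
  -- Step 2: polar coordinates
  have hsmeas : Measurable (fun p : Metric.sphere (0 : EuclideanSpace ℝ (Fin n)) 1 × Ioi (0:ℝ)
      => ENNReal.ofReal (F ((p.2 : ℝ) • (p.1 : EuclideanSpace ℝ (Fin n))))) := by
    apply Measurable.ennreal_ofReal
    apply hFm.comp
    exact ((continuous_subtype_val.comp continuous_snd).smul
      (continuous_subtype_val.comp continuous_fst)).measurable
  have hkey : ∫⁻ x, ENNReal.ofReal (F x) ∂volume
      = ∫⁻ u, ENNReal.ofReal (P (ρ u)) ∂((volume : Measure (EuclideanSpace ℝ (Fin n))).toSphere) := by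
    rw [polar_lintegral hn F hFm, MeasureTheory.lintegral_prod _ hsmeas.aemeasurable]
    refine lintegral_congr fun u => ?_
    have hd : Measurable (fun r : Ioi (0:ℝ) => ENNReal.ofReal ((r:ℝ)^(n-1))) :=
      (measurable_subtype_coe.pow_const _).ennreal_ofReal
    have hmr : Measurable (fun r : Ioi (0:ℝ) =>
        ENNReal.ofReal (F ((r:ℝ) • (u : EuclideanSpace ℝ (Fin n))))) :=
      (hFm.comp (measurable_subtype_coe.smul_const _)).ennreal_ofReal
    calc ∫⁻ r : Ioi (0:ℝ), ENNReal.ofReal (F ((r:ℝ) • (u : EuclideanSpace ℝ (Fin n))))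
          ∂(Measure.volumeIoiPow (n-1))
        = ∫⁻ r : Ioi (0:ℝ), ENNReal.ofReal ((r:ℝ)^(n-1))
            * ENNReal.ofReal (F ((r:ℝ) • (u : EuclideanSpace ℝ (Fin n))))
            ∂((volume : Measure ℝ).comap Subtype.val) := by
          rw [Measure.volumeIoiPow, lintegral_withDensity_eq_lintegral_mul _ ?_ hmr]
          · rfl
          · exact (measurable_subtype_coe.pow_const _).ennreal_ofReal
      _ = ∫⁻ r in Ioi (0:ℝ), ENNReal.ofReal (r^(n-1))
            * ENNReal.ofReal (F (r • (u : EuclideanSpace ℝ (Fin n)))) ∂volume :=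
          lintegral_subtype_comap measurableSet_Ioi
            (fun r : ℝ => ENNReal.ofReal (r^(n-1))
              * ENNReal.ofReal (F (r • (u : EuclideanSpace ℝ (Fin n)))))
      _ = ∫⁻ r in Ioi (0:ℝ),
            ENNReal.ofReal (r^(n-1) * Real.exp (-Real.pi * (max 0 (r - ρ u))^2)) ∂volume := by
          refine setLIntegral_congr_fun measurableSet_Ioi (
            fun r hr => ?_)
          rw [hFsmul u r hr, ← ENNReal.ofReal_mul (pow_nonneg (le_of_lt hr) _)]
      _ = ENNReal.ofReal (P (ρ u)) := by
          rw [← ofReal_integral_eq_lintegral_ofReal (oneDim (n-1) (hρpos u)).1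
            ((ae_restrict_iff' measurableSet_Ioi).2 (Filter.Eventually.of_forall
              fun r hr => by have : (0:ℝ) < r := hr; positivity)), hone u]
  -- Step 3: over the sphere
  have hPcont : Continuous fun u => P (ρ u) := by
    rw [hPdef]
    exact continuous_finset_sum _ fun j _ => continuous_const.mul (hρcont.pow j)
  have hPint : Integrable (fun u => P (ρ u))
      ((volume : Measure (EuclideanSpace ℝ (Fin n))).toSphere) :=
    hPcont.integrable_of_hasCompactSupport (HasCompactSupport.of_compactSpace _)
  have hPnonneg : ∀ u, 0 ≤ P (ρ u) := fun u =>
    Finset.sum_nonneg fun j _ => mul_nonneg (hbnonneg j) (pow_nonneg (hρpos u).le j)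
  have h2 : (∫⁻ u, ENNReal.ofReal (P (ρ u))
        ∂((volume : Measure (EuclideanSpace ℝ (Fin n))).toSphere)).toReal
      = ∫ u, P (ρ u) ∂((volume : Measure (EuclideanSpace ℝ (Fin n))).toSphere) := by
    rw [← ofReal_integral_eq_lintegral_ofReal hPint (Filter.Eventually.of_forall hPnonneg),
      ENNReal.toReal_ofReal (integral_nonneg hPnonneg)]
  rw [h1, hkey, h2]
  -- Step 4: evaluate the sphere integral
  have hn0 : (0:ℝ) < (n:ℝ) := by exact_mod_cast (by omega : 0 < n)
  have hVn := unitBallVolF_pos n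
  have hnV : (0:ℝ) < (n:ℝ) * unitBallVolF n := by positivity
  have hmσ : ∀ j : ℕ, (∫ u, ρ u ^ j
        ∂((volume : Measure (EuclideanSpace ℝ (Fin n))).toSphere))
      = ((n:ℝ) * unitBallVolF n) * ∫ u, ρ u ^ j ∂(sphereProb n) := by
    intro j
    rw [sphereProb, integral_smul_measure, sphere_mass hn,
      ← ENNReal.ofReal_inv_of_pos hnV, ENNReal.toReal_ofReal (by positivity), smul_eq_mul,
      ← mul_assoc, mul_inv_cancel₀ hnV.ne', one_mul]
  calc ∫ u, P (ρ u) ∂((volume : Measure (EuclideanSpace ℝ (Fin n))).toSphere)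
      = ∑ j ∈ Finset.range (n+1), b j * ∫ u, ρ u ^ j
          ∂((volume : Measure (EuclideanSpace ℝ (Fin n))).toSphere) := by
        rw [hPdef]
        beta_reduce
        rw [integral_finset_sum (f := fun j u => b j * ρ u ^ j) _ (fun j _ =>
          (continuous_const.mul (hρcont.pow j)).integrable_of_hasCompactSupport
            (HasCompactSupport.of_compactSpace _))]
        exact Finset.sum_congr rfl fun j _ => MeasureTheory.integral_const_mul _ _
    _ = ∑ j ∈ Finset.range (n + 1), dualVolInt n j K := by
        refine Finset.sum_congr rfl fun j hj => ?_
        have hj' : j ≤ n := by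
          have := Finset.mem_range.1 hj; omega
        have hI : (∫ u, ρ u ^ j ∂(sphereProb n))
            = ∫ u : Metric.sphere (0 : EuclideanSpace ℝ (Fin n)) 1,
                radialFn K ↑u ^ j ∂(sphereProb n) := rfl
        rw [hmσ j, dualVolInt, ← hI]
        rcases eq_or_lt_of_le hj' with rfl | hjn
        · simp only [hbdef, if_pos rfl, Nat.choose_self, Nat.sub_self, unitBallVolF_zero,
            Nat.cast_one, div_one, one_mul]
          field_simp
        · rw [hbdef]
          simp only [if_neg hjn.ne]
          have hc := coeff_eq (n := n) (j := j) hjn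
          linear_combination (∫ u, ρ u ^ j ∂(sphereProb n)) * hc
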